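/- Let λ = (λ_1,…,λ_m) be a partition of n, and let z be a nonzero element of the degree-2 part H² of R_λ with z² = 0 in R_λ. Then there is a unique index i ∈ {1,…,m} such that z lies in the ℤ-span of x_{i,1},…,x_{i,λ_i}. -/

import Mathlib

/-!
Context: for a partition λ = (λ_1,…,λ_m) of n (so λ_1 ≥ … ≥ λ_m ≥ 1 and
Σλ_i = n), let R_λ := ℤ[x_{i,j}]/(x_{i,1}², x_{i,j}² − x_{i,1}x_{i,j} for
2 ≤ j ≤ λ_i), the integral cohomology ring of the ℚ-trivial Bott manifold
𝓗_λ = 𝓗_{λ_1} × ⋯ × 𝓗_{λ_m}.  The degree-2 part H² of R_λ is the free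
abelian group with basis the images of all the x_{i,j}.

STATEMENT 8: Let z be a nonzero element of H² with z² = 0 in R_λ.  Then there
is a unique index i ∈ {1,…,m} such that z lies in the ℤ-span of
x_{i,1},…,x_{i,λ_i}.
-/

open MvPolynomial

set_option synthInstance.maxHeartbeats 1000000
set_option maxHeartbeats 2000000

noncomputable section

/-- The defining relations x_{i,1}², x_{i,j}² − x_{i,1}x_{i,j} (j ≥ 2) of R_λ. -/
def prel (m : ℕ) (lam : Fin m → ℕ) (p : Σ i : Fin m, Fin (lam i)) :
    MvPolynomial (Σ i : Fin m, Fin (lam i)) ℤ :=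
  X p ^ 2 -
    (if p.2.val = 0 then 0
      else X (⟨p.1, ⟨0, Nat.lt_of_le_of_lt (Nat.zero_le _) p.2.isLt⟩⟩ :
        Σ i : Fin m, Fin (lam i))) * X p

/-- R_λ, the integral cohomology ring of 𝓗_λ. -/
abbrev PRing (m : ℕ) (lam : Fin m → ℕ) : Type :=
  MvPolynomial (Σ i : Fin m, Fin (lam i)) ℤ ⧸ Ideal.span (Set.range (prel m lam))

/-- The image x_{i,j} of X (i,j) in R_λ. -/
def px (m : ℕ) (lam : Fin m → ℕ) (p : Σ i : Fin m, Fin (lam i)) : PRing m lam :=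
  Ideal.Quotient.mk _ (X p)

namespace SqZeroAux

open TrivSqZeroExt DualNumber

/-! ### target rings -/

abbrev A2 := DualNumber (DualNumber ℤ)

def aa : A2 := ε
def bb : A2 := inl ε

@[simp] lemma fst_aa : TrivSqZeroExt.fst aa = 0 := rfl
@[simp] lemma snd_aa : TrivSqZeroExt.snd aa = 1 := rfl
@[simp] lemma fst_bb : TrivSqZeroExt.fst bb = ε := rfl
@[simp] lemma snd_bb : TrivSqZeroExt.snd bb = 0 := rfl

lemma aa_sq : aa * aa = 0 := eps_mul_eps

lemma bb_sq : bb * bb = 0 := by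
  ext
  · rw [TrivSqZeroExt.fst_mul]; rfl
  · rw [TrivSqZeroExt.fst_mul]; rfl
  · rw [DualNumber.snd_mul]; rfl
  · rw [DualNumber.snd_mul]; rfl

lemma snd_snd_ab (N : ℤ) : (((algebraMap ℤ A2 N) * (aa * bb)).snd).snd = N := by
  simp only [DualNumber.snd_mul, TrivSqZeroExt.fst_mul, fst_aa, snd_aa, fst_bb, snd_bb,
    TrivSqZeroExt.algebraMap_eq_inl', TrivSqZeroExt.fst_inl, TrivSqZeroExt.snd_inl,
    zero_mul, mul_zero, zero_add, add_zero, one_mul, fst_eps, snd_eps, mul_one]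
  rfl

lemma eq_zero_of_mul_ab (N : ℤ) (h : (algebraMap ℤ A2 N) * (aa * bb) = 0) : N = 0 := by
  have h2 := congrArg (fun x => (TrivSqZeroExt.snd x).snd) h
  rw [show (TrivSqZeroExt.snd (0 : A2)).snd = 0 from rfl] at h2
  rwa [show (TrivSqZeroExt.snd ((algebraMap ℤ A2 N) * (aa * bb))).snd
      = (((algebraMap ℤ A2 N) * (aa * bb)).snd).snd from rfl, snd_snd_ab] at h2

lemma sq_expand (cp cq : ℤ) :
    (cp • aa + cq • bb) ^ 2 = algebraMap ℤ A2 (2 * (cp * cq)) * (aa * bb) := by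
  have h1 : ∀ (k : ℤ) (x : A2), k • x = algebraMap ℤ A2 k * x := fun k x => by
    rw [eq_intCast]; exact zsmul_eq_mul x k
  rw [h1, h1, map_mul, map_mul, map_ofNat]
  linear_combination (algebraMap ℤ A2 cp) ^ 2 * aa_sq + (algebraMap ℤ A2 cq) ^ 2 * bb_sq

/-! ### Finsupp sums of functions supported at one or two points -/

lemma sum_one {ι M : Type*} [DecidableEq ι] [AddCommGroup M] (c : ι →₀ ℤ) (p : ι) (a : M) :
    (c.sum fun r k => k • (if r = p then a else 0)) = c p • a := by
  classical
  have : (c.sum fun r k => k • (if r = p then a else 0))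
      = c.sum fun r k => (if r = p then k • a else 0) := by
    apply Finsupp.sum_congr
    intro r _; split_ifs <;> simp
  rw [this, Finsupp.sum_ite_eq' c p (fun _ k => k • a)]
  split_ifs with h
  · rfl
  · simp [Finsupp.notMem_support_iff.mp h]

lemma sum_two {ι M : Type*} [DecidableEq ι] [AddCommGroup M] (c : ι →₀ ℤ) (p q : ι)
    (hpq : p ≠ q) (a b : M) :
    (c.sum fun r k => k • (if r = p then a else if r = q then b else 0))
      = c p • a + c q • b := by
  classical
  have : (c.sum fun r k => k • (if r = p then a else if r = q then b else 0))
      = c.sum fun r k => k • (if r = p then a else 0) + k • (if r = q then b else 0) := by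
    apply Finsupp.sum_congr
    intro r _
    split_ifs with h1 h2 <;> simp_all
  rw [this, Finsupp.sum_add, sum_one, sum_one]

/-! ### lifting ring homs out of `PRing` -/

variable {m : ℕ} {lam : Fin m → ℕ}

def plift {A : Type} [CommRing A] (g : (Σ i : Fin m, Fin (lam i)) → A)
    (hg : ∀ p : Σ i : Fin m, Fin (lam i),
      g p ^ 2 = (if p.2.val = 0 then 0
        else g ⟨p.1, ⟨0, Nat.lt_of_le_of_lt (Nat.zero_le _) p.2.isLt⟩⟩) * g p) :
    PRing m lam →+* A :=
  Ideal.Quotient.lift _ (MvPolynomial.eval₂Hom (Int.castRingHom A) g) (by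
    intro a ha
    have hker : Ideal.span (Set.range (prel m lam)) ≤
        RingHom.ker (MvPolynomial.eval₂Hom (Int.castRingHom A) g) := by
      rw [Ideal.span_le]
      rintro _ ⟨p, rfl⟩
      show (MvPolynomial.eval₂Hom (Int.castRingHom A) g) (prel m lam p) = 0
      by_cases h : p.2.val = 0
      · simp only [prel, h, if_true, zero_mul, sub_zero, map_pow, eval₂Hom_X']
        rw [hg p]; simp [h]
      · simp only [prel, h, if_false, map_sub, map_mul, map_pow, eval₂Hom_X']
        rw [hg p]; simp [h]
    exact hker ha)

lemma plift_px {A : Type} [CommRing A] (g : (Σ i : Fin m, Fin (lam i)) → A) (hg)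
    (p : Σ i : Fin m, Fin (lam i)) :
    plift g hg (px m lam p) = g p := by
  exact (Ideal.Quotient.lift_mk _ _ _).trans (by simp)

lemma plift_sum {A : Type} [CommRing A] (g : (Σ i : Fin m, Fin (lam i)) → A) (hg)
    (c : (Σ i : Fin m, Fin (lam i)) →₀ ℤ) :
    plift g hg (c.sum fun r k => k • px m lam r) = c.sum fun r k => k • g r := by
  rw [map_finsuppSum]
  exact Finsupp.sum_congr fun r _ => by rw [map_zsmul, plift_px]

/-- distinct first components give distinct sigma elements -/
lemma sigma_ne_of_fst {p q : Σ i : Fin m, Fin (lam i)} (h : p.1 ≠ q.1) : p ≠ q :=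
  fun e => h (congrArg Sigma.fst e)

lemma sigma_ne_of_val {p q : Σ i : Fin m, Fin (lam i)} (h : p.2.val ≠ q.2.val) : p ≠ q :=
  fun e => h (congrArg (fun s : Σ i : Fin m, Fin (lam i) => s.2.val) e)

/-! ### the two specific coefficient-extraction maps -/

/-- `g` for the two-point evaluation. -/
def g2 (p q : Σ i : Fin m, Fin (lam i)) : (Σ i : Fin m, Fin (lam i)) → A2 :=
  fun r => if r = p then aa else if r = q then bb else 0

lemma hg2 (p q : Σ i : Fin m, Fin (lam i)) (hpq : p.1 ≠ q.1) :
    ∀ r : Σ i : Fin m, Fin (lam i),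
      g2 p q r ^ 2 = (if r.2.val = 0 then 0
        else g2 p q ⟨r.1, ⟨0, Nat.lt_of_le_of_lt (Nat.zero_le _) r.2.isLt⟩⟩) * g2 p q r := by
  intro r
  by_cases hr0 : r.2.val = 0
  · rw [if_pos hr0, zero_mul, pow_two]
    unfold g2
    split_ifs with h1 h2
    · exact aa_sq
    · exact bb_sq
    · exact mul_zero 0
  · rw [if_neg hr0, pow_two]
    by_cases h1 : r = p
    · subst h1
      have e1 : (⟨r.1, ⟨0, Nat.lt_of_le_of_lt (Nat.zero_le _) r.2.isLt⟩⟩ :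
          Σ i : Fin m, Fin (lam i)) ≠ r := sigma_ne_of_val (by simpa using Ne.symm hr0)
      have e2 : (⟨r.1, ⟨0, Nat.lt_of_le_of_lt (Nat.zero_le _) r.2.isLt⟩⟩ :
          Σ i : Fin m, Fin (lam i)) ≠ q := sigma_ne_of_fst (by simpa using hpq)
      rw [show g2 r q (⟨r.1, ⟨0, _⟩⟩) = 0 from by unfold g2; rw [if_neg e1, if_neg e2],
        zero_mul]
      show g2 r q r * g2 r q r = 0
      rw [show g2 r q r = aa from by unfold g2; rw [if_pos rfl]]
      exact aa_sq
    · by_cases h2 : r = q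
      · subst h2
        have e1 : (⟨r.1, ⟨0, Nat.lt_of_le_of_lt (Nat.zero_le _) r.2.isLt⟩⟩ :
            Σ i : Fin m, Fin (lam i)) ≠ p := sigma_ne_of_fst (by simpa using Ne.symm hpq)
        have e2 : (⟨r.1, ⟨0, Nat.lt_of_le_of_lt (Nat.zero_le _) r.2.isLt⟩⟩ :
            Σ i : Fin m, Fin (lam i)) ≠ r := sigma_ne_of_val (by simpa using Ne.symm hr0)
        rw [show g2 p r (⟨r.1, ⟨0, _⟩⟩) = 0 from by unfold g2; rw [if_neg e1, if_neg e2],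
          zero_mul]
        show g2 p r r * g2 p r r = 0
        rw [show g2 p r r = bb from by unfold g2; rw [if_neg (Ne.symm (sigma_ne_of_fst hpq)), if_pos rfl]]
        exact bb_sq
      · rw [show g2 p q r = 0 from by unfold g2; rw [if_neg h1, if_neg h2], mul_zero, mul_zero]

/-- `g` for the single-point (coefficient) evaluation. -/
def g1 (p : Σ i : Fin m, Fin (lam i)) : (Σ i : Fin m, Fin (lam i)) → DualNumber ℤ :=
  fun r => if r = p then ε else 0

lemma hg1 (p : Σ i : Fin m, Fin (lam i)) :
    ∀ r : Σ i : Fin m, Fin (lam i),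
      g1 p r ^ 2 = (if r.2.val = 0 then 0
        else g1 p ⟨r.1, ⟨0, Nat.lt_of_le_of_lt (Nat.zero_le _) r.2.isLt⟩⟩) * g1 p r := by
  intro r
  have hsq : g1 p r ^ 2 = 0 := by
    unfold g1; rw [pow_two]
    split_ifs with h1
    · exact eps_mul_eps
    · exact mul_zero 0
  rw [hsq]
  by_cases hr0 : r.2.val = 0
  · rw [if_pos hr0, zero_mul]
  · rw [if_neg hr0]
    by_cases h1 : r = p
    · subst h1
      have e1 : (⟨r.1, ⟨0, Nat.lt_of_le_of_lt (Nat.zero_le _) r.2.isLt⟩⟩ :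
          Σ i : Fin m, Fin (lam i)) ≠ r := sigma_ne_of_val (by simpa using Ne.symm hr0)
      rw [show g1 r (⟨r.1, ⟨0, _⟩⟩) = 0 from by unfold g1; rw [if_neg e1], zero_mul]
    · rw [show g1 p r = 0 from by unfold g1; rw [if_neg h1], mul_zero]

/-- The coefficient of `x_p` in any Finsupp representation of `z` is intrinsic. -/
lemma coef_eq (p : Σ i : Fin m, Fin (lam i)) (c : (Σ i : Fin m, Fin (lam i)) →₀ ℤ) :
    (plift (g1 p) (hg1 p) (c.sum fun r k => k • px m lam r)).snd = c p := by
  classical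
  rw [plift_sum]
  unfold g1
  rw [sum_one]
  rw [TrivSqZeroExt.snd_smul, snd_eps, smul_eq_mul, mul_one]

/-- Key orthogonality: coefficients in different blocks multiply to zero. -/
lemma cross_zero (p q : Σ i : Fin m, Fin (lam i)) (hpq : p.1 ≠ q.1)
    (c : (Σ i : Fin m, Fin (lam i)) →₀ ℤ)
    (hsq : (c.sum fun r k => k • px m lam r) ^ 2 = 0) :
    c p * c q = 0 := by
  classical
  set φ := plift (g2 p q) (hg2 p q hpq) with hφ
  have h1 : φ ((c.sum fun r k => k • px m lam r) ^ 2) = 0 := by rw [hsq, map_zero]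
  rw [map_pow, plift_sum] at h1
  unfold g2 at h1
  rw [sum_two c p q (sigma_ne_of_fst hpq) aa bb, sq_expand] at h1
  have := eq_zero_of_mul_ab _ h1
  omega
end SqZeroAux

open SqZeroAux

theorem square_zero_lies_in_factor (n m : ℕ) (lam : Fin m → ℕ)
    (hpos : ∀ i, 1 ≤ lam i) (hmono : Antitone lam) (hsum : ∑ i, lam i = n)
    (z : PRing m lam)
    (hz : z ∈ Submodule.span ℤ (Set.range (px m lam)))
    (hz0 : z ≠ 0) (hsq : z ^ 2 = 0) :
    ∃! i : Fin m,
      z ∈ Submodule.span ℤ (Set.range fun j : Fin (lam i) => px m lam ⟨i, j⟩) := by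
  classical
  obtain ⟨c, hc⟩ := Finsupp.mem_span_range_iff_exists_finsupp.mp hz
  -- some coefficient is nonzero
  have hcne : ∃ p, c p ≠ 0 := by
    by_contra h
    push_neg at h
    apply hz0
    rw [← hc]
    rw [Finsupp.sum]
    exact Finset.sum_eq_zero fun r _ => by rw [h r, zero_smul]
  obtain ⟨p0, hp0⟩ := hcne
  -- all support lies in block p0.1
  have hsupp : ∀ r ∈ c.support, r.1 = p0.1 := by
    intro r hr
    by_contra hne
    have := cross_zero p0 r (fun e => hne e.symm) c (by rw [hc]; exact hsq)
    rcases mul_eq_zero.mp this with h | h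
    · exact hp0 h
    · exact Finsupp.mem_support_iff.mp hr h
  refine ⟨p0.1, ?_, ?_⟩
  · -- existence
    rw [← hc, Finsupp.sum]
    apply Submodule.sum_mem
    intro r hr
    apply Submodule.smul_mem
    apply Submodule.subset_span
    have h1 := hsupp r hr
    obtain ⟨r1, r2⟩ := r
    cases h1
    exact ⟨r2, rfl⟩
  · -- uniqueness
    intro i hi
    by_contra hne
    obtain ⟨d, hd⟩ := Finsupp.mem_span_range_iff_exists_finsupp.mp hi
    -- evaluate the coefficient of x_{p0} via the d-representation:
    have h1 : (plift (g1 p0) (hg1 p0) z).snd = c p0 := by rw [← hc]; exact coef_eq p0 c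
    have h2 : plift (g1 p0) (hg1 p0) z = 0 := by
      rw [← hd, map_finsuppSum]
      rw [Finsupp.sum]
      apply Finset.sum_eq_zero
      intro j _
      rw [map_zsmul, plift_px]
      have : (⟨i, j⟩ : Σ i : Fin m, Fin (lam i)) ≠ p0 := sigma_ne_of_fst (by simpa using hne)
      unfold g1
      rw [if_neg this, smul_zero]
    rw [h2] at h1
    exact hp0 (by simpa using h1.symm)


end
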